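/- Let n, k, r be integers with k, r ≥ 2 and n ≥ 2k, and write n = pk + q with p, q integers and 1 ≤ q ≤ k. The r-uniform hypergraph H_U(n; k, r) = ((p − 1)K_k^r ∪ K_q^r) ∨_r (K_k^r)^c is vertex-k-maximal. -/

import Mathlib

/-- A finite hypergraph: a finite vertex set together with a finite set of
non-empty edges, each a subset of the vertex set. -/
structure NatHypergraph where
  verts : Finset ℕ
  edges : Finset (Finset ℕ)
  edge_sub : ∀ e ∈ edges, e ⊆ verts
  edge_nonempty : ∀ e ∈ edges, e.Nonempty

namespace NatHypergraph

/-- `H` is `r`-uniform if every edge has cardinality `r`. -/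
def IsUniform (H : NatHypergraph) (r : ℕ) : Prop := ∀ e ∈ H.edges, e.card = r

/-- `H'` is a subhypergraph of `H`. -/
def IsSub (H' H : NatHypergraph) : Prop := H'.verts ⊆ H.verts ∧ H'.edges ⊆ H.edges

/-- Two vertices are adjacent if some edge contains both. -/
def Adj (H : NatHypergraph) (u v : ℕ) : Prop := ∃ e ∈ H.edges, u ∈ e ∧ v ∈ e

/-- `H` is connected if every pair of vertices is joined by a path
(equivalently, a walk, i.e. is reachable via the adjacency relation). -/
def Connected (H : NatHypergraph) : Prop :=
  ∀ u ∈ H.verts, ∀ v ∈ H.verts, Relation.ReflTransGen H.Adj u v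

/-- The subhypergraph of `H` induced by the vertex set `Y`. -/
def induce (H : NatHypergraph) (Y : Finset ℕ) : NatHypergraph where
  verts := H.verts ∩ Y
  edges := H.edges.filter (fun e => e ⊆ Y)
  edge_sub := by
    intro e he
    simp only [Finset.mem_filter] at he
    exact Finset.subset_inter (H.edge_sub e he.1) he.2
  edge_nonempty := by
    intro e he
    simp only [Finset.mem_filter] at he
    exact H.edge_nonempty e he.1

/-- `X` is a vertex-cut of `H` if deleting `X` leaves a disconnected hypergraph. -/
def IsVertexCut (H : NatHypergraph) (X : Finset ℕ) : Prop :=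
  X ⊆ H.verts ∧ ¬ (H.induce (H.verts \ X)).Connected

open Classical in
/-- The vertex-connectivity of `H`: the minimum cardinality of a vertex-cut if one
exists, and `|V(H)| - 1` otherwise. -/
noncomputable def kappa (H : NatHypergraph) : ℕ :=
  if ∃ X, H.IsVertexCut X then sInf {m | ∃ X, H.IsVertexCut X ∧ X.card = m}
  else H.verts.card - 1

/-- `κ̄(H)`: the maximum vertex-connectivity over all subhypergraphs of `H`. -/
noncomputable def kappaBar (H : NatHypergraph) : ℕ :=
  sSup {m | ∃ H' : NatHypergraph, H'.IsSub H ∧ H'.kappa = m}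

/-- `H + e`: add the edge `e` (a non-empty subset of the vertices) to `H`. -/
def addEdge (H : NatHypergraph) (e : Finset ℕ) : NatHypergraph where
  verts := H.verts
  edges := if e ⊆ H.verts ∧ e.Nonempty then insert e H.edges else H.edges
  edge_sub := by
    intro f hf
    split at hf
    · rcases Finset.mem_insert.mp hf with rfl | hf
      · exact (by assumption : f ⊆ H.verts ∧ f.Nonempty).1
      · exact H.edge_sub f hf
    · exact H.edge_sub f hf
  edge_nonempty := by
    intro f hf
    split at hf
    · rcases Finset.mem_insert.mp hf with rfl | hf
      · exact (by assumption : f ⊆ H.verts ∧ f.Nonempty).2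
      · exact H.edge_nonempty f hf
    · exact H.edge_nonempty f hf

/-- `H + F`: add a set `F` of edges to `H`. -/
def addEdges (H : NatHypergraph) (F : Finset (Finset ℕ)) : NatHypergraph where
  verts := H.verts
  edges := H.edges ∪ F.filter (fun e => e ⊆ H.verts ∧ e.Nonempty)
  edge_sub := by
    intro f hf
    rcases Finset.mem_union.mp hf with hf | hf
    · exact H.edge_sub f hf
    · exact (Finset.mem_filter.mp hf).2.1
  edge_nonempty := by
    intro f hf
    rcases Finset.mem_union.mp hf with hf | hf
    · exact H.edge_nonempty f hf
    · exact (Finset.mem_filter.mp hf).2.2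

/-- `H` is vertex-`k`-maximal (as an `r`-uniform hypergraph): `κ̄(H) ≤ k`, but adding
any edge of the complement `H^c` creates a subhypergraph of connectivity at least `k + 1`. -/
def VertexKMaximal (H : NatHypergraph) (r k : ℕ) : Prop :=
  H.IsUniform r ∧ H.kappaBar ≤ k ∧
    ∀ e : Finset ℕ, e ⊆ H.verts → e.card = r → e ∉ H.edges →
      k + 1 ≤ (H.addEdge e).kappaBar

/-- The complete `r`-uniform hypergraph on the vertex set `V`. -/
def completeHG (V : Finset ℕ) (r : ℕ) : NatHypergraph where
  verts := V
  edges := (V.powersetCard r).filter (fun e => e.Nonempty)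
  edge_sub := by
    intro e he
    simp only [Finset.mem_filter, Finset.mem_powersetCard] at he
    exact he.1.1
  edge_nonempty := by
    intro e he
    exact (Finset.mem_filter.mp he).2

/-- The hypergraph on vertex set `V` with no edges. -/
def emptyHG (V : Finset ℕ) : NatHypergraph where
  verts := V
  edges := ∅
  edge_sub := by simp
  edge_nonempty := by simp

/-- The `r`-join `H₁ ∨_r H₂`: the union of `H₁` and `H₂` together with all
`r`-element subsets of `V(H₁) ∪ V(H₂)` meeting both `V(H₁)` and `V(H₂)`. -/
def rJoin (H1 H2 : NatHypergraph) (r : ℕ) : NatHypergraph where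
  verts := H1.verts ∪ H2.verts
  edges := H1.edges ∪ H2.edges ∪
    ((H1.verts ∪ H2.verts).powersetCard r).filter
      (fun e => (e ∩ H1.verts).Nonempty ∧ (e ∩ H2.verts).Nonempty)
  edge_sub := by
    intro e he
    rcases Finset.mem_union.mp he with he | he
    · rcases Finset.mem_union.mp he with he | he
      · exact (H1.edge_sub e he).trans Finset.subset_union_left
      · exact (H2.edge_sub e he).trans Finset.subset_union_right
    · exact (Finset.mem_powersetCard.mp (Finset.mem_filter.mp he).1).1
  edge_nonempty := by
    intro e he
    rcases Finset.mem_union.mp he with he | he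
    · rcases Finset.mem_union.mp he with he | he
      · exact H1.edge_nonempty e he
      · exact H2.edge_nonempty e he
    · obtain ⟨x, hx⟩ := (Finset.mem_filter.mp he).2.1
      exact ⟨x, (Finset.mem_inter.mp hx).1⟩

/-- The union of two hypergraphs. -/
def hUnion (H1 H2 : NatHypergraph) : NatHypergraph where
  verts := H1.verts ∪ H2.verts
  edges := H1.edges ∪ H2.edges
  edge_sub := by
    intro e he
    rcases Finset.mem_union.mp he with he | he
    · exact (H1.edge_sub e he).trans Finset.subset_union_left
    · exact (H2.edge_sub e he).trans Finset.subset_union_right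
  edge_nonempty := by
    intro e he
    rcases Finset.mem_union.mp he with he | he
    · exact H1.edge_nonempty e he
    · exact H2.edge_nonempty e he

/-- The union of the hypergraphs `f 0, …, f (m-1)`. -/
def unionOver (m : ℕ) (f : ℕ → NatHypergraph) : NatHypergraph where
  verts := (Finset.range m).biUnion (fun i => (f i).verts)
  edges := (Finset.range m).biUnion (fun i => (f i).edges)
  edge_sub := by
    intro e he
    obtain ⟨i, hi, hei⟩ := Finset.mem_biUnion.mp he
    exact ((f i).edge_sub e hei).trans (Finset.subset_biUnion_of_mem (fun i => (f i).verts) hi)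
  edge_nonempty := by
    intro e he
    obtain ⟨i, _, hei⟩ := Finset.mem_biUnion.mp he
    exact (f i).edge_nonempty e hei

/-- `C` is a component of `G`: a maximal connected subhypergraph. -/
def IsComponent (G C : NatHypergraph) : Prop :=
  C.IsSub G ∧ C.Connected ∧
    ∀ C' : NatHypergraph, C'.IsSub G → C'.Connected → C.IsSub C' → C' = C

/-- `(S, H₁, H₂)` is a separation triple of `H`: `S` is a minimum vertex-cut,
`H₁ = H[S ∪ V(C₁)]` and `H₂ = H[S ∪ V(C₂)]`, where `C₁` is a component of `H - S`
and `C₂ = H - (S ∪ V(C₁))`. -/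
def IsSeparationTriple (H : NatHypergraph) (S : Finset ℕ) (H1 H2 : NatHypergraph) : Prop :=
  H.IsVertexCut S ∧ (∀ X : Finset ℕ, H.IsVertexCut X → S.card ≤ X.card) ∧
    ∃ C1 : NatHypergraph, IsComponent (H.induce (H.verts \ S)) C1 ∧
      H1 = H.induce (S ∪ C1.verts) ∧
      H2 = H.induce (S ∪ (H.verts \ (S ∪ C1.verts)))

end NatHypergraph

namespace NatHypergraph

open Finset Relation

lemma myext {H1 H2 : NatHypergraph} (hv : H1.verts = H2.verts) (he : H1.edges = H2.edges) :
    H1 = H2 := by cases H1; cases H2; simp_all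

lemma induce_verts (H : NatHypergraph) (Y : Finset ℕ) : (H.induce Y).verts = H.verts ∩ Y := rfl

lemma mem_induce_edges {H : NatHypergraph} {Y e} :
    e ∈ (H.induce Y).edges ↔ e ∈ H.edges ∧ e ⊆ Y := by
  simp [induce]

lemma induce_induce (H : NatHypergraph) {Y Z : Finset ℕ} (h : Z ⊆ Y) :
    (H.induce Y).induce Z = H.induce Z := by
  apply myext
  · simp only [induce_verts, Finset.inter_assoc]
    congr 1
    exact Finset.inter_eq_right.mpr h
  · ext e
    simp only [mem_induce_edges]
    exact ⟨fun ⟨⟨h1, _⟩, h3⟩ => ⟨h1, h3⟩, fun ⟨h1, h3⟩ => ⟨⟨h1, h3.trans h⟩, h3⟩⟩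

lemma adj_symm (H : NatHypergraph) : Symmetric H.Adj :=
  fun _ _ ⟨e, he, hu, hv⟩ => ⟨e, he, hv, hu⟩

lemma connected_of_hub {H : NatHypergraph} {t : ℕ} (_ht : t ∈ H.verts)
    (h : ∀ u ∈ H.verts, Relation.ReflTransGen H.Adj u t) : H.Connected := by
  intro u hu v hv
  exact (h u hu).trans (@Std.Symm.symm _ _ (@Relation.ReflTransGen.stdSymm _ _ ⟨fun _ _ hab => H.adj_symm hab⟩) _ _ (h v hv))

lemma reach_eq_of_no_edges {H : NatHypergraph} (h : ∀ f ∈ H.edges, False) {u v : ℕ}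
    (hr : Relation.ReflTransGen H.Adj u v) : u = v := by
  induction hr with
  | refl => rfl
  | tail _ hadj ih => obtain ⟨e, he, _, _⟩ := hadj; exact absurd he (h e)

lemma exists_pair_of_not_connected {H : NatHypergraph} (h : ¬ H.Connected) :
    ∃ u ∈ H.verts, ∃ v ∈ H.verts, u ≠ v ∧ ¬ Relation.ReflTransGen H.Adj u v := by
  simp only [Connected, not_forall] at h
  obtain ⟨u, hu, v, hv, hnr⟩ := h
  refine ⟨u, hu, v, hv, ?_, hnr⟩
  rintro rfl; exact hnr .refl

lemma kappa_le_of_cut {H : NatHypergraph} {X : Finset ℕ} (h : H.IsVertexCut X) :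
    H.kappa ≤ X.card := by
  classical
  rw [kappa, if_pos ⟨X, h⟩]
  exact Nat.sInf_le ⟨X, h, rfl⟩

lemma cut_card_le {H : NatHypergraph} {X : Finset ℕ} (h : H.IsVertexCut X) :
    X.card + 2 ≤ H.verts.card := by
  obtain ⟨u, hu, v, hv, huv, _⟩ := exists_pair_of_not_connected h.2
  rw [induce_verts] at hu hv
  have hu' : u ∈ H.verts \ X := (Finset.mem_inter.mp hu).2
  have hv' : v ∈ H.verts \ X := (Finset.mem_inter.mp hv).2
  have hsub : insert u (insert v X) ⊆ H.verts := by
    intro x hx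
    rcases Finset.mem_insert.mp hx with rfl | hx
    · exact (Finset.mem_sdiff.mp hu').1
    rcases Finset.mem_insert.mp hx with rfl | hx
    · exact (Finset.mem_sdiff.mp hv').1
    · exact h.1 hx
  have hcard : (insert u (insert v X)).card = X.card + 2 := by
    rw [Finset.card_insert_of_notMem, Finset.card_insert_of_notMem]
    · exact (Finset.mem_sdiff.mp hv').2
    · simp only [Finset.mem_insert]
      push_neg
      exact ⟨huv, (Finset.mem_sdiff.mp hu').2⟩
  calc X.card + 2 = (insert u (insert v X)).card := hcard.symm
    _ ≤ H.verts.card := Finset.card_le_card hsub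

lemma kappa_le_pred (H : NatHypergraph) : H.kappa ≤ H.verts.card - 1 := by
  classical
  by_cases h : ∃ X, H.IsVertexCut X
  · obtain ⟨X, hX⟩ := h
    calc H.kappa ≤ X.card := kappa_le_of_cut hX
      _ ≤ H.verts.card - 1 := by have := cut_card_le hX; omega
  · rw [kappa, if_neg h]

lemma le_kappa {H : NatHypergraph} {k : ℕ} (hn : k + 2 ≤ H.verts.card)
    (h : ∀ X ⊆ H.verts, X.card ≤ k → (H.induce (H.verts \ X)).Connected) :
    k + 1 ≤ H.kappa := by
  classical
  rw [kappa]
  split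
  · apply le_csInf
    · next hex => obtain ⟨X, hX⟩ := hex; exact ⟨X.card, X, hX, rfl⟩
    · rintro m ⟨X, hX, rfl⟩
      by_contra hlt
      exact hX.2 (h X hX.1 (by omega))
  · omega

lemma kappa_le_verts (H : NatHypergraph) : H.kappa ≤ H.verts.card :=
  (kappa_le_pred H).trans (Nat.sub_le _ _)

lemma kappaBar_le {H : NatHypergraph} {k : ℕ} (h : ∀ H' : NatHypergraph, H'.IsSub H → H'.kappa ≤ k) :
    H.kappaBar ≤ k := by
  apply csSup_le
  · exact ⟨H.kappa, H, ⟨le_refl _, le_refl _⟩, rfl⟩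
  · rintro m ⟨H', hsub, rfl⟩
    exact h H' hsub

lemma le_kappaBar {H H' : NatHypergraph} {k : ℕ} (hsub : H'.IsSub H) (hk : k ≤ H'.kappa) :
    k ≤ H.kappaBar := by
  refine hk.trans (le_csSup ⟨H.verts.card, ?_⟩ ⟨H', hsub, rfl⟩)
  rintro m ⟨H'', hsub'', rfl⟩
  exact (kappa_le_verts H'').trans (Finset.card_le_card hsub''.1)

lemma induce_isSub (H : NatHypergraph) (Y : Finset ℕ) : (H.induce Y).IsSub H :=
  ⟨Finset.inter_subset_left, Finset.filter_subset _ _⟩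

end NatHypergraph
namespace HUAux

open Finset Relation NatHypergraph

variable (p r : ℕ) (A : ℕ → Finset ℕ) (B C : Finset ℕ)

def L : Finset ℕ := (Finset.range (p - 1)).biUnion A ∪ B

def HU : NatHypergraph :=
  NatHypergraph.rJoin
    (NatHypergraph.hUnion
      (NatHypergraph.unionOver (p - 1) (fun i => NatHypergraph.completeHG (A i) r))
      (NatHypergraph.completeHG B r))
    (NatHypergraph.emptyHG C) r

lemma HU_verts : (HU p r A B C).verts = L p A B ∪ C := rfl

lemma mem_HU_edges (hr : 1 ≤ r) {e : Finset ℕ} :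
    e ∈ (HU p r A B C).edges ↔
      e.card = r ∧ ((∃ i < p - 1, e ⊆ A i) ∨ e ⊆ B ∨
        (e ⊆ L p A B ∪ C ∧ (e ∩ L p A B).Nonempty ∧ (e ∩ C).Nonempty)) := by
  have hne : ∀ f : Finset ℕ, f.card = r → f.Nonempty := by
    intro f hf
    exact Finset.card_pos.mp (by omega)
  simp only [HU, L, NatHypergraph.rJoin, NatHypergraph.hUnion, NatHypergraph.unionOver,
    NatHypergraph.completeHG, NatHypergraph.emptyHG, Finset.mem_union, Finset.mem_filter,
    Finset.mem_powersetCard, Finset.mem_biUnion, Finset.mem_range, Finset.notMem_empty,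
    or_false]
  constructor
  · rintro ((⟨i, hi, ⟨hsub, hcard⟩, -⟩ | ⟨⟨hsub, hcard⟩, -⟩) | hmem)
    · exact ⟨hcard, Or.inl ⟨i, hi, hsub⟩⟩
    · exact ⟨hcard, Or.inr (Or.inl hsub)⟩
    · obtain ⟨hpc, h1, h2⟩ := Finset.mem_filter.mp hmem
      obtain ⟨hsub, hcard⟩ := Finset.mem_powersetCard.mp hpc
      exact ⟨hcard, Or.inr (Or.inr ⟨hsub, h1, h2⟩)⟩
  · rintro ⟨hcard, (⟨i, hi, hsub⟩ | hsub | ⟨hsub, h1, h2⟩)⟩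
    · exact Or.inl (Or.inl ⟨i, hi, ⟨hsub, hcard⟩, hne e hcard⟩)
    · exact Or.inl (Or.inr ⟨⟨hsub, hcard⟩, hne e hcard⟩)
    · exact Or.inr (Finset.mem_filter.mpr ⟨Finset.mem_powersetCard.mpr ⟨hsub, hcard⟩, h1, h2⟩)

variable {p r A B C}

lemma disjLC (hACd : ∀ i < p - 1, Disjoint (A i) C) (hBC : Disjoint B C) :
    Disjoint (L p A B) C := by
  rw [L, Finset.disjoint_union_left, Finset.disjoint_biUnion_left]
  exact ⟨fun i hi => hACd i (Finset.mem_range.mp hi), hBC⟩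

lemma HU_uniform (hr : 1 ≤ r) : (HU p r A B C).IsUniform r := by
  intro e he
  exact ((mem_HU_edges p r A B C hr).mp he).1

/-- an edge of HU contained in L lies in a single class -/
lemma edge_in_L (hr : 1 ≤ r) (hACd : ∀ i < p - 1, Disjoint (A i) C) (hBC : Disjoint B C)
    {f : Finset ℕ} (hf : f ∈ (HU p r A B C).edges) (hfL : f ⊆ L p A B) :
    (∃ i < p - 1, f ⊆ A i) ∨ f ⊆ B := by
  rcases ((mem_HU_edges p r A B C hr).mp hf).2 with h | h | ⟨-, -, ⟨x, hx⟩⟩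
  · exact Or.inl h
  · exact Or.inr h
  · rw [Finset.mem_inter] at hx
    exact absurd hx.2 (Finset.disjoint_left.mp (disjLC hACd hBC) (hfL hx.1))

/-- no edge of HU is contained in C -/
lemma no_edge_in_C (hr : 1 ≤ r) (hACd : ∀ i < p - 1, Disjoint (A i) C) (hBC : Disjoint B C)
    {f : Finset ℕ} (hf : f ∈ (HU p r A B C).edges) (hfC : f ⊆ C) : False := by
  obtain ⟨hcard, h⟩ := (mem_HU_edges p r A B C hr).mp hf
  have hfne : f.Nonempty := Finset.card_pos.mp (by omega)
  rcases h with ⟨i, hi, hsub⟩ | hsub | ⟨-, ⟨x, hx⟩, -⟩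
  · obtain ⟨x, hx⟩ := hfne
    exact Finset.disjoint_left.mp (hACd i hi) (hsub hx) (hfC hx)
  · obtain ⟨x, hx⟩ := hfne
    exact Finset.disjoint_left.mp hBC (hsub hx) (hfC hx)
  · rw [Finset.mem_inter] at hx
    exact Finset.disjoint_left.mp (disjLC hACd hBC) hx.2 (hfC hx.1)

/-- existence of a cross edge through two given vertices inside a window Y -/
lemma cross_edge (hr : 2 ≤ r) {Y : Finset ℕ} (hY : Y ⊆ L p A B ∪ C) {u v : ℕ}
    (hu : u ∈ Y) (hv : v ∈ Y) (huL : u ∈ L p A B) (hvC : v ∈ C) (hrY : r ≤ Y.card) :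
    ∃ f ∈ (HU p r A B C).edges, f ⊆ Y ∧ u ∈ f ∧ v ∈ f := by
  have hsub : ({u, v} : Finset ℕ) ⊆ Y := by
    intro x hx
    rcases Finset.mem_insert.mp hx with rfl | hx
    · exact hu
    · rw [Finset.mem_singleton] at hx
      exact hx ▸ hv
  have hcard2 : ({u, v} : Finset ℕ).card ≤ r :=
    le_trans (Finset.card_insert_le u {v}) (by simp; omega)
  obtain ⟨f, hsf, hfY, hfcard⟩ := Finset.exists_subsuperset_card_eq hsub hcard2 hrY
  have huf : u ∈ f := hsf (Finset.mem_insert_self u {v})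
  have hvf : v ∈ f := hsf (Finset.mem_insert_of_mem (Finset.mem_singleton_self v))
  refine ⟨f, (mem_HU_edges p r A B C (by omega)).mpr ⟨hfcard, Or.inr (Or.inr ⟨hfY.trans hY,
    ⟨u, Finset.mem_inter.mpr ⟨huf, huL⟩⟩, ⟨v, Finset.mem_inter.mpr ⟨hvf, hvC⟩⟩⟩)⟩, hfY, huf, hvf⟩

end HUAux
namespace HUAux

open Finset Relation NatHypergraph

variable {p r k q : ℕ} {A : ℕ → Finset ℕ} {B C : Finset ℕ}

lemma part1 (hk : 2 ≤ k) (hr : 2 ≤ r) (hqk : q ≤ k)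
    (hA : ∀ i < p - 1, (A i).card = k) (hB : B.card = q) (hC : C.card = k)
    (hAA : ∀ i < p - 1, ∀ j < p - 1, i ≠ j → Disjoint (A i) (A j))
    (hABd : ∀ i < p - 1, Disjoint (A i) B) (hACd : ∀ i < p - 1, Disjoint (A i) C)
    (hBC : Disjoint B C)
    (H' : NatHypergraph) (hsub : H'.IsSub (HU p r A B C)) : H'.kappa ≤ k := by
  have hr1 : 1 ≤ r := by omega
  have hLC : Disjoint (L p A B) C := disjLC hACd hBC
  by_cases hsmall : H'.verts.card ≤ k + 1
  · exact (kappa_le_pred H').trans (by omega)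
  push_neg at hsmall
  have hVsub : H'.verts ⊆ L p A B ∪ C := by
    rw [← HU_verts p r A B C]; exact hsub.1
  set T := H'.verts ∩ L p A B with hTdef
  set S := H'.verts ∩ C with hSdef
  have hTsub : T ⊆ H'.verts := Finset.inter_subset_left
  have hSsub : S ⊆ H'.verts := Finset.inter_subset_left
  have hVT : H'.verts \ T = S := by
    ext v
    simp only [hTdef, hSdef, Finset.mem_sdiff, Finset.mem_inter, not_and]
    constructor
    · rintro ⟨hv, hnl⟩
      rcases Finset.mem_union.mp (hVsub hv) with h | h
      · exact absurd h (hnl hv)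
      · exact ⟨hv, h⟩
    · rintro ⟨hv, hc⟩
      exact ⟨hv, fun _ hl => Finset.disjoint_left.mp hLC hl hc⟩
  have hVS : H'.verts \ S = T := by
    ext v
    simp only [hTdef, hSdef, Finset.mem_sdiff, Finset.mem_inter, not_and]
    constructor
    · rintro ⟨hv, hnc⟩
      rcases Finset.mem_union.mp (hVsub hv) with h | h
      · exact ⟨hv, h⟩
      · exact absurd h (hnc hv)
    · rintro ⟨hv, hl⟩
      exact ⟨hv, fun _ hc => Finset.disjoint_left.mp hLC hl hc⟩
  by_cases hclass : (∃ i < p - 1, T ⊆ A i) ∨ T ⊆ B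
  · -- T lies in one class: cut T, the rest is inside C with no edges
    have hTk : T.card ≤ k := by
      rcases hclass with ⟨i, hi, hTi⟩ | hTB
      · exact (Finset.card_le_card hTi).trans (le_of_eq (hA i hi))
      · exact (Finset.card_le_card hTB).trans (hB ▸ hqk)
    have hcardST : S.card + T.card = H'.verts.card := by
      rw [← hVT]
      have := Finset.card_sdiff_add_card_eq_card hTsub
      omega
    have hcut : H'.IsVertexCut T := by
      refine ⟨hTsub, fun hcon => ?_⟩
      have hS2 : 1 < S.card := by omega
      obtain ⟨u, hu, v, hv, huv⟩ := Finset.one_lt_card.mp hS2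
      have hmem : ∀ w ∈ S, w ∈ (H'.induce (H'.verts \ T)).verts := by
        intro w hw
        rw [induce_verts, hVT]
        exact Finset.mem_inter.mpr ⟨hSsub hw, hw⟩
      have hreach := hcon u (hmem u hu) v (hmem v hv)
      refine huv (reach_eq_of_no_edges ?_ hreach)
      intro f hf
      rw [mem_induce_edges, hVT] at hf
      exact no_edge_in_C hr1 hACd hBC (hsub.2 hf.1)
        (hf.2.trans (hSdef ▸ Finset.inter_subset_right))
    exact (kappa_le_of_cut hcut).trans hTk
  · -- T meets two classes: cut S
    push_neg at hclass
    obtain ⟨hnA, hnB⟩ := hclass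
    obtain ⟨y, hyT, hynB⟩ := Finset.not_subset.mp hnB
    have hyL : y ∈ L p A B := (Finset.mem_inter.mp hyT).2
    obtain ⟨j, hj, hyAj⟩ : ∃ j < p - 1, y ∈ A j := by
      rcases Finset.mem_union.mp hyL with h | h
      · obtain ⟨j, hj, hyj⟩ := Finset.mem_biUnion.mp h
        exact ⟨j, Finset.mem_range.mp hj, hyj⟩
      · exact absurd h hynB
    obtain ⟨x, hxT, hxnAj⟩ := Finset.not_subset.mp (hnA j hj)
    have hcut : H'.IsVertexCut S := by
      refine ⟨hSsub, fun hcon => ?_⟩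
      have hmem : ∀ w ∈ T, w ∈ (H'.induce (H'.verts \ S)).verts := by
        intro w hw
        rw [induce_verts, hVS]
        exact Finset.mem_inter.mpr ⟨hTsub hw, hw⟩
      have hreach := hcon x (hmem x hxT) y (hmem y hyT)
      -- invariant: reachable vertices from x stay outside A j
      have hinv : ∀ v, Relation.ReflTransGen (H'.induce (H'.verts \ S)).Adj x v → v ∉ A j := by
        intro v hv
        induction hv with
        | refl => exact hxnAj
        | tail _ hadj ih =>
          next b c _ =>
          obtain ⟨f, hf, hbf, hcf⟩ := hadj
          rw [mem_induce_edges, hVS] at hf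
          have hfL : f ⊆ L p A B := hf.2.trans (hTdef ▸ Finset.inter_subset_right)
          rcases edge_in_L hr1 hACd hBC (hsub.2 hf.1) hfL with ⟨i, hi, hfi⟩ | hfB
          · have hij : i ≠ j := fun h => ih (h ▸ hfi hbf)
            exact fun hc => Finset.disjoint_left.mp (hAA i hi j hj hij) (hfi hcf) hc
          · exact fun hc => Finset.disjoint_left.mp (hABd j hj) hc (hfB hcf)
      exact hinv y hreach hyAj
    refine (kappa_le_of_cut hcut).trans ?_
    calc S.card ≤ C.card := Finset.card_le_card (hSdef ▸ Finset.inter_subset_right)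
      _ = k := hC

end HUAux
namespace HUAux

open Finset Relation NatHypergraph

lemma mem_addEdge {H : NatHypergraph} {e f : Finset ℕ} (he : e ⊆ H.verts) (hne : e.Nonempty) :
    f ∈ (H.addEdge e).edges ↔ f = e ∨ f ∈ H.edges := by
  simp only [NatHypergraph.addEdge, if_pos (⟨he, hne⟩ : e ⊆ H.verts ∧ e.Nonempty),
    Finset.mem_insert]

lemma window {k : ℕ} (HP : NatHypergraph) (W : Finset ℕ) (hW : W ⊆ HP.verts)
    (hcard : k + 2 ≤ W.card)
    (hconn : ∀ X ⊆ W, X.card ≤ k → (HP.induce (W \ X)).Connected) :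
    k + 1 ≤ HP.kappaBar := by
  have hv : (HP.induce W).verts = W := by
    rw [induce_verts]; exact Finset.inter_eq_right.mpr hW
  apply le_kappaBar (induce_isSub HP W)
  apply le_kappa (by rw [hv]; exact hcard)
  intro X hX hXk
  rw [hv, induce_induce HP Finset.sdiff_subset]
  exact hconn X (by rw [hv] at hX; exact hX) hXk

variable {p r k q : ℕ} {A : ℕ → Finset ℕ} {B C : Finset ℕ}

lemma cross_hub (hr : 2 ≤ r)
    {HP : NatHypergraph} (hHPv : HP.verts = L p A B ∪ C)
    (hHPe : ∀ f ∈ (HU p r A B C).edges, f ∈ HP.edges)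
    {Y : Finset ℕ} (hY : Y ⊆ L p A B ∪ C) (hrY : r ≤ Y.card)
    {x c : ℕ} (hx : x ∈ Y) (hxL : x ∈ L p A B) (hc : c ∈ Y) (hcC : c ∈ C) :
    (HP.induce Y).Connected := by
  have hverts : (HP.induce Y).verts = Y := by
    rw [induce_verts, hHPv]; exact Finset.inter_eq_right.mpr hY
  have hadj : ∀ u ∈ Y, ∀ v ∈ Y, u ∈ L p A B → v ∈ C → (HP.induce Y).Adj u v := by
    intro u hu v hv huL hvC
    obtain ⟨f, hf, hfY, huf, hvf⟩ := cross_edge hr hY hu hv huL hvC hrY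
    exact ⟨f, mem_induce_edges.mpr ⟨hHPe f hf, hfY⟩, huf, hvf⟩
  apply connected_of_hub (t := x) (by rw [hverts]; exact hx)
  intro u hu
  rw [hverts] at hu
  rcases Finset.mem_union.mp (hY hu) with huL | huC
  · exact (Relation.ReflTransGen.single (hadj u hu c hc huL hcC)).tail
      ((HP.induce Y).adj_symm (hadj x hx c hc hxL hcC))
  · exact Relation.ReflTransGen.single ((HP.induce Y).adj_symm (hadj x hx u hu hxL huC))

lemma one_edge_connected {HP : NatHypergraph} {Y e : Finset ℕ} (he : e ∈ HP.edges)
    (heY : e ⊆ Y) (hYe : Y ⊆ e) : (HP.induce Y).Connected := by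
  intro u hu v hv
  rw [induce_verts, Finset.mem_inter] at hu hv
  exact Relation.ReflTransGen.single
    ⟨e, mem_induce_edges.mpr ⟨he, heY⟩, hYe hu.2, hYe hv.2⟩

lemma pair_subset {u v : ℕ} {Y : Finset ℕ} (hu : u ∈ Y) (hv : v ∈ Y) :
    ({u, v} : Finset ℕ) ⊆ Y := by
  intro x hx
  rcases Finset.mem_insert.mp hx with rfl | hx
  · exact hu
  · rw [Finset.mem_singleton] at hx
    exact hx ▸ hv

lemma clique_connected (hr : 2 ≤ r) {HP : NatHypergraph} {D Y : Finset ℕ}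
    (hedge : ∀ f ⊆ D, f.card = r → f ∈ HP.edges)
    (hYD : Y ⊆ D) (hrY : r ≤ Y.card) : (HP.induce Y).Connected := by
  intro u hu v hv
  rw [induce_verts, Finset.mem_inter] at hu hv
  rcases eq_or_ne u v with rfl | huv
  · exact Relation.ReflTransGen.refl
  have hc2 : ({u, v} : Finset ℕ).card ≤ r :=
    (Finset.card_insert_le u {v}).trans (by simp; omega)
  obtain ⟨f, hsf, hfY, hfcard⟩ :=
    Finset.exists_subsuperset_card_eq (pair_subset hu.2 hv.2) hc2 hrY
  exact Relation.ReflTransGen.single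
    ⟨f, mem_induce_edges.mpr ⟨hedge f (hfY.trans hYD) hfcard, hfY⟩,
      hsf (Finset.mem_insert_self _ _), hsf (by simp)⟩

lemma part2 (hk : 2 ≤ k) (hr : 2 ≤ r) {n : ℕ} (hn : 2 * k ≤ n)
    (hq1 : 1 ≤ q) (hqk : q ≤ k) (hpq : n = p * k + q)
    (hA : ∀ i < p - 1, (A i).card = k) (hB : B.card = q) (hC : C.card = k)
    (hACd : ∀ i < p - 1, Disjoint (A i) C) (hBC : Disjoint B C)
    {e : Finset ℕ} (heV : e ⊆ L p A B ∪ C) (hecard : e.card = r)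
    (hene : e ∉ (HU p r A B C).edges) :
    k + 1 ≤ ((HU p r A B C).addEdge e).kappaBar := by
  have hr1 : 1 ≤ r := by omega
  have hLC : Disjoint (L p A B) C := disjLC hACd hBC
  have hnA : ∀ i < p - 1, ¬ e ⊆ A i := fun i hi hsub =>
    hene ((mem_HU_edges p r A B C hr1).mpr ⟨hecard, Or.inl ⟨i, hi, hsub⟩⟩)
  have hnB : ¬ e ⊆ B := fun hsub =>
    hene ((mem_HU_edges p r A B C hr1).mpr ⟨hecard, Or.inr (Or.inl hsub)⟩)
  have hncross : ¬((e ∩ L p A B).Nonempty ∧ (e ∩ C).Nonempty) := fun h =>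
    hene ((mem_HU_edges p r A B C hr1).mpr ⟨hecard, Or.inr (Or.inr ⟨heV, h.1, h.2⟩)⟩)
  have heLC : e ⊆ L p A B ∨ e ⊆ C := by
    rcases Finset.eq_empty_or_nonempty (e ∩ C) with hC0 | hCne
    · left
      intro v hv
      rcases Finset.mem_union.mp (heV hv) with h | h
      · exact h
      · exact absurd (Finset.mem_inter.mpr ⟨hv, h⟩) (by rw [hC0]; exact Finset.notMem_empty v)
    · rcases Finset.eq_empty_or_nonempty (e ∩ L p A B) with hL0 | hLne
      · right
        intro v hv
        rcases Finset.mem_union.mp (heV hv) with h | h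
        · exact absurd (Finset.mem_inter.mpr ⟨hv, h⟩) (by rw [hL0]; exact Finset.notMem_empty v)
        · exact h
      · exact absurd ⟨hLne, hCne⟩ hncross
  set HP := (HU p r A B C).addEdge e with hHPdef
  have hene2 : e.Nonempty := Finset.card_pos.mp (by omega)
  have hHPv : HP.verts = L p A B ∪ C := rfl
  have hmemHP : ∀ f : Finset ℕ, f ∈ HP.edges ↔ f = e ∨ f ∈ (HU p r A B C).edges :=
    fun f => mem_addEdge (by rw [HU_verts]; exact heV) hene2
  have heHP : e ∈ HP.edges := (hmemHP e).mpr (Or.inl rfl)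
  have hHUHP : ∀ f ∈ (HU p r A B C).edges, f ∈ HP.edges :=
    fun f hf => (hmemHP f).mpr (Or.inr hf)
  rcases heLC with heL | heC
  · -- e inside L
    by_cases hrk : r ≤ k
    · -- case (b1): take a class A j meeting e, window (A j ∪ e) ∪ C
      obtain ⟨zB, hzB, hznB⟩ := Finset.not_subset.mp hnB
      obtain ⟨j, hj, hzAj⟩ : ∃ j < p - 1, zB ∈ A j := by
        rcases Finset.mem_union.mp (heL hzB) with h | h
        · obtain ⟨j, hj, hzj⟩ := Finset.mem_biUnion.mp h
          exact ⟨j, Finset.mem_range.mp hj, hzj⟩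
        · exact absurd h hznB
      obtain ⟨w, hwe, hwnAj⟩ := Finset.not_subset.mp (hnA j hj)
      have hDk : (A j).card = k := hA j hj
      have hDL : A j ⊆ L p A B := fun v hv =>
        Finset.mem_union_left _ (Finset.mem_biUnion.mpr ⟨j, Finset.mem_range.mpr hj, hv⟩)
      have hDedge : ∀ f ⊆ A j, f.card = r → f ∈ (HU p r A B C).edges := fun f hf hfc =>
        (mem_HU_edges p r A B C hr1).mpr ⟨hfc, Or.inl ⟨j, hj, hf⟩⟩
      set W := (A j ∪ e) ∪ C with hWdef
      have hDeL : A j ∪ e ⊆ L p A B := Finset.union_subset hDL heL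
      have hdisj : Disjoint (A j ∪ e) C := hLC.mono_left hDeL
      have hDecard : k + 1 ≤ (A j ∪ e).card := by
        have hins : insert w (A j) ⊆ A j ∪ e :=
          Finset.insert_subset (Finset.mem_union_right _ hwe) Finset.subset_union_left
        calc k + 1 = (insert w (A j)).card := by
              rw [Finset.card_insert_of_notMem hwnAj, hDk]
          _ ≤ (A j ∪ e).card := Finset.card_le_card hins
      have hWcard : W.card = (A j ∪ e).card + k := by
        rw [hWdef, Finset.card_union_of_disjoint hdisj, hC]
      have hWLC : W ⊆ L p A B ∪ C :=
        Finset.union_subset (hDeL.trans Finset.subset_union_left) Finset.subset_union_right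
      apply window HP W (by rw [hHPv]; exact hWLC) (by omega)
      intro X hXW hXk
      have hYW : W \ X ⊆ W := Finset.sdiff_subset
      have hYLC : W \ X ⊆ L p A B ∪ C := hYW.trans hWLC
      have hYcard : k + 1 ≤ (W \ X).card := by
        rw [Finset.card_sdiff_of_subset hXW]
        omega
      by_cases hYC : ((W \ X) ∩ C).Nonempty
      · obtain ⟨c, hc⟩ := hYC
        rw [Finset.mem_inter] at hc
        have hnYC : ¬ W \ X ⊆ C := by
          intro h
          have := Finset.card_le_card h
          rw [hC] at this
          omega
        obtain ⟨x, hxY, hxnC⟩ := Finset.not_subset.mp hnYC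
        have hxL : x ∈ L p A B := by
          rcases Finset.mem_union.mp (hYLC hxY) with h | h
          · exact h
          · exact absurd h hxnC
        exact cross_hub hr hHPv hHUHP hYLC (by omega) hxY hxL hc.1 hc.2
      · -- X = C, remaining is A j ∪ e, hub zB
        have hCX : C ⊆ X := by
          intro v hv
          by_contra hvX
          exact hYC ⟨v, Finset.mem_inter.mpr
            ⟨Finset.mem_sdiff.mpr ⟨Finset.mem_union_right _ hv, hvX⟩, hv⟩⟩
        have hXC : X = C :=
          (Finset.eq_of_subset_of_card_le hCX (by rw [hC]; exact hXk)).symm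
        have hYeq : W \ X = A j ∪ e := by
          rw [hXC, hWdef, Finset.union_sdiff_cancel_right hdisj]
        rw [hYeq]
        have hverts : (HP.induce (A j ∪ e)).verts = A j ∪ e := by
          rw [induce_verts, hHPv]
          exact Finset.inter_eq_right.mpr (hDeL.trans Finset.subset_union_left)
        have hzDe : zB ∈ A j ∪ e := Finset.mem_union_left _ hzAj
        apply connected_of_hub (t := zB) (by rw [hverts]; exact hzDe)
        intro u hu
        rw [hverts] at hu
        rcases Finset.mem_union.mp hu with huD | hue
        · rcases eq_or_ne u zB with rfl | huz
          · exact Relation.ReflTransGen.refl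
          · have hc2 : ({u, zB} : Finset ℕ).card ≤ r :=
              (Finset.card_insert_le u {zB}).trans (by simp; omega)
            obtain ⟨f, hsf, hfD, hfcard⟩ :=
              Finset.exists_subsuperset_card_eq (pair_subset huD hzAj) hc2 (by omega)
            exact Relation.ReflTransGen.single ⟨f,
              mem_induce_edges.mpr ⟨hHUHP f (hDedge f hfD hfcard),
                hfD.trans Finset.subset_union_left⟩,
              hsf (Finset.mem_insert_self _ _), hsf (by simp)⟩
        · exact Relation.ReflTransGen.single ⟨e,
            mem_induce_edges.mpr ⟨heHP, Finset.subset_union_right⟩, hue, hzB⟩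
    · -- case (b2): k < r, window e ∪ C
      set W := e ∪ C with hWdef
      have hdisj : Disjoint e C := hLC.mono_left heL
      have hWcard : W.card = r + k := by
        rw [hWdef, Finset.card_union_of_disjoint hdisj, hC, hecard]
      have hWLC : W ⊆ L p A B ∪ C :=
        Finset.union_subset (heL.trans Finset.subset_union_left) Finset.subset_union_right
      apply window HP W (by rw [hHPv]; exact hWLC) (by omega)
      intro X hXW hXk
      have hYW : W \ X ⊆ W := Finset.sdiff_subset
      have hYLC : W \ X ⊆ L p A B ∪ C := hYW.trans hWLC
      have hYcard : r ≤ (W \ X).card := by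
        rw [Finset.card_sdiff_of_subset hXW]
        omega
      have hYe : ∃ x ∈ W \ X, x ∈ e := by
        have hne : ¬ e ⊆ X := by
          intro h
          have := Finset.card_le_card h
          omega
        obtain ⟨x, hxe, hxX⟩ := Finset.not_subset.mp hne
        exact ⟨x, Finset.mem_sdiff.mpr ⟨Finset.mem_union_left _ hxe, hxX⟩, hxe⟩
      obtain ⟨x, hxY, hxe⟩ := hYe
      by_cases hYC : ((W \ X) ∩ C).Nonempty
      · obtain ⟨c, hc⟩ := hYC
        rw [Finset.mem_inter] at hc
        exact cross_hub hr hHPv hHUHP hYLC hYcard hxY (heL hxe) hc.1 hc.2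
      · have hCX : C ⊆ X := by
          intro v hv
          by_contra hvX
          exact hYC ⟨v, Finset.mem_inter.mpr
            ⟨Finset.mem_sdiff.mpr ⟨Finset.mem_union_right _ hv, hvX⟩, hv⟩⟩
        have hXC : X = C :=
          (Finset.eq_of_subset_of_card_le hCX (by rw [hC]; exact hXk)).symm
        have hYeq : W \ X = e := by
          rw [hXC, hWdef, Finset.union_sdiff_cancel_right hdisj]
        rw [hYeq]
        exact one_edge_connected heHP (le_refl e) (le_refl e)
  · -- e inside C: window D ∪ e with D a full class of size k inside L
    have hrk : r ≤ k := by
      have := Finset.card_le_card heC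
      rw [hecard, hC] at this
      exact this
    obtain ⟨D, hDL, hDk, hDedge⟩ : ∃ D : Finset ℕ, D ⊆ L p A B ∧ D.card = k ∧
        (∀ f ⊆ D, f.card = r → f ∈ (HU p r A B C).edges) := by
      by_cases hp : 0 < p - 1
      · refine ⟨A 0, fun v hv => Finset.mem_union_left _
          (Finset.mem_biUnion.mpr ⟨0, Finset.mem_range.mpr hp, hv⟩), hA 0 hp, ?_⟩
        intro f hf hfc
        exact (mem_HU_edges p r A B C hr1).mpr ⟨hfc, Or.inl ⟨0, hp, hf⟩⟩
      · have hq : q = k := by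
          have hp1 : p ≤ 1 := by omega
          have : p * k ≤ k := by
            calc p * k ≤ 1 * k := Nat.mul_le_mul_right k hp1
              _ = k := one_mul k
          omega
        refine ⟨B, Finset.subset_union_right, by rw [hB, hq], ?_⟩
        intro f hf hfc
        exact (mem_HU_edges p r A B C hr1).mpr ⟨hfc, Or.inr (Or.inl hf)⟩
    set W := D ∪ e with hWdef
    have hdisj : Disjoint D e := hLC.mono hDL heC
    have hWcard : W.card = k + r := by
      rw [hWdef, Finset.card_union_of_disjoint hdisj, hDk, hecard]
    have hWLC : W ⊆ L p A B ∪ C :=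
      Finset.union_subset (hDL.trans Finset.subset_union_left)
        (heC.trans Finset.subset_union_right)
    apply window HP W (by rw [hHPv]; exact hWLC) (by omega)
    intro X hXW hXk
    have hYW : W \ X ⊆ W := Finset.sdiff_subset
    have hYLC : W \ X ⊆ L p A B ∪ C := hYW.trans hWLC
    have hYcard : r ≤ (W \ X).card := by
      rw [Finset.card_sdiff_of_subset hXW]
      omega
    by_cases hYD : ((W \ X) ∩ D).Nonempty
    · by_cases hYe : ((W \ X) ∩ e).Nonempty
      · obtain ⟨x, hx⟩ := hYD
        obtain ⟨c, hc⟩ := hYe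
        rw [Finset.mem_inter] at hx hc
        exact cross_hub hr hHPv hHUHP hYLC hYcard hx.1 (hDL hx.2) hc.1 (heC hc.2)
      · have hYsubD : W \ X ⊆ D := by
          intro v hv
          rcases Finset.mem_union.mp (hYW hv) with h | h
          · exact h
          · exact absurd ⟨v, Finset.mem_inter.mpr ⟨hv, h⟩⟩ hYe
        exact clique_connected hr (fun f hf hfc => hHUHP f (hDedge f hf hfc)) hYsubD hYcard
    · have hDX : D ⊆ X := by
        intro v hv
        by_contra hvX
        exact hYD ⟨v, Finset.mem_inter.mpr
          ⟨Finset.mem_sdiff.mpr ⟨Finset.mem_union_left _ hv, hvX⟩, hv⟩⟩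
      have hXD : X = D :=
        (Finset.eq_of_subset_of_card_le hDX (by rw [hDk]; exact hXk)).symm
      have hYeq : W \ X = e := by
        rw [hXD, hWdef, Finset.union_sdiff_cancel_left hdisj]
      rw [hYeq]
      exact one_edge_connected heHP (le_refl e) (le_refl e)

end HUAux
/-- For `k, r ≥ 2`, `n ≥ 2k` and `n = pk + q` with `1 ≤ q ≤ k`, the
hypergraph `H_U(n;k,r) = ((p-1)K_k^r ∪ K_q^r) ∨_r (K_k^r)^c` is vertex-`k`-maximal. -/
theorem stmt_10 (n k r p q : ℕ) (hk : 2 ≤ k) (hr : 2 ≤ r) (hn : 2 * k ≤ n)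
    (hq1 : 1 ≤ q) (hqk : q ≤ k) (hpq : n = p * k + q)
    (A : ℕ → Finset ℕ) (B C : Finset ℕ)
    (hA : ∀ i < p - 1, (A i).card = k) (hB : B.card = q) (hC : C.card = k)
    (hAA : ∀ i < p - 1, ∀ j < p - 1, i ≠ j → Disjoint (A i) (A j))
    (hABd : ∀ i < p - 1, Disjoint (A i) B) (hACd : ∀ i < p - 1, Disjoint (A i) C)
    (hBC : Disjoint B C) :
    (NatHypergraph.rJoin
      (NatHypergraph.hUnion
        (NatHypergraph.unionOver (p - 1) (fun i => NatHypergraph.completeHG (A i) r))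
        (NatHypergraph.completeHG B r))
      (NatHypergraph.emptyHG C) r).VertexKMaximal r k := by
  show (HUAux.HU p r A B C).VertexKMaximal r k
  refine ⟨HUAux.HU_uniform (by omega),
    NatHypergraph.kappaBar_le (fun H' hs =>
      HUAux.part1 hk hr hqk hA hB hC hAA hABd hACd hBC H' hs), ?_⟩
  intro e heV hecard hene
  exact HUAux.part2 hk hr hn hq1 hqk hpq hA hB hC hACd hBC heV hecard hene
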